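/- Let K ≥ 4 (so that there are at least two non-colluding indices) and L ≤ K−2. Let I = {1,2}, and for k ∈ I let (R_{k,l})_{l ∈ {1,...,K}, l≠k} be mutually independent uniform random variables on ℤ_M with R_{k,k} = −⊕_{l≠k} R_{k,l}. Then for any values r of (R_{k,l})_{k∈I, l∈L} and any σ = (σ_j)_{j∈K∖L} in ℤ_M^{K−L}, the conditional probability P(⊕_{k∈I} R_{k,j} = σ_j for all j ∈ K∖L | (R_{k,l})_{k∈I,l∈L} = r) equals M^{−(K−L−1)} times the indicator that Σ_{j∈K∖L} σ_j ⊕ Σ_{l∈L} (R_{1,l}⊕R_{2,l}) = 0 mod M. -/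

import Mathlib

open MeasureTheory ProbabilityTheory Finset

noncomputable instance {M : ℕ} : MeasurableSpace (ZMod M) := ⊤

namespace Stmt8Aux
variable {Mo K : ℕ}

def ext' (hK2 : 2 ≤ K) (x : {p : Fin 2 × Fin K // p.2 ≠ Fin.castLE hK2 p.1} → ZMod Mo)
    (k : Fin 2) (l : Fin K) : ZMod Mo :=
  if h : l = Fin.castLE hK2 k then 0 else x ⟨(k, l), h⟩

def gg (hK2 : 2 ≤ K) (x : {p : Fin 2 × Fin K // p.2 ≠ Fin.castLE hK2 p.1} → ZMod Mo)
    (k : Fin 2) (j : Fin K) : ZMod Mo :=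
  if j = Fin.castLE hK2 k then
    -∑ l ∈ Finset.univ.erase (Fin.castLE hK2 k), ext' hK2 x k l
  else ext' hK2 x k j

lemma ext'_eq (hK2 : 2 ≤ K) (x) (k : Fin 2) (l : Fin K) (h : l ≠ Fin.castLE hK2 k) :
    ext' (Mo := Mo) hK2 x k l = x ⟨(k, l), h⟩ := dif_neg h

lemma gg_off (hK2 : 2 ≤ K) (x) (k : Fin 2) (j : Fin K) (h : j ≠ Fin.castLE hK2 k) :
    gg (Mo := Mo) hK2 x k j = x ⟨(k, j), h⟩ := by
  rw [gg, if_neg h, ext'_eq]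

lemma gg_off' (hK2 : 2 ≤ K) (x) (k : Fin 2) (j : Fin K) (h : j ≠ Fin.castLE hK2 k) :
    gg (Mo := Mo) hK2 x k j = ext' hK2 x k j := if_neg h

lemma gg_diag (hK2 : 2 ≤ K) (x) (k : Fin 2) :
    gg (Mo := Mo) hK2 x k (Fin.castLE hK2 k)
      = -∑ l ∈ Finset.univ.erase (Fin.castLE hK2 k), ext' hK2 x k l := if_pos rfl

lemma dg_ne (hK2 : 2 ≤ K) : Fin.castLE hK2 (0 : Fin 2) ≠ Fin.castLE hK2 1 := by
  simp [Fin.ext_iff]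

section Counting
open scoped Classical

variable (hK2 : 2 ≤ K) (ℒ : Finset (Fin K)) (r : Fin 2 → Fin K → ZMod Mo)
  (σ : Fin K → ZMod Mo)

def Pc (x : {p : Fin 2 × Fin K // p.2 ≠ Fin.castLE hK2 p.1} → ZMod Mo) : Prop :=
  ∀ k : Fin 2, ∀ l ∈ ℒ, ext' hK2 x k l = r k l

def Pa' (x : {p : Fin 2 × Fin K // p.2 ≠ Fin.castLE hK2 p.1} → ZMod Mo) : Prop :=
  ∀ j ∈ ℒᶜ.erase (Fin.castLE hK2 0), gg hK2 x 0 j + gg hK2 x 1 j = σ j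

def Pa (x : {p : Fin 2 × Fin K // p.2 ≠ Fin.castLE hK2 p.1} → ZMod Mo) : Prop :=
  ∀ j ∈ ℒᶜ, gg hK2 x 0 j + gg hK2 x 1 j = σ j

lemma gg_rowsum (x : {p : Fin 2 × Fin K // p.2 ≠ Fin.castLE hK2 p.1} → ZMod Mo) (k : Fin 2) :
    ∑ j : Fin K, gg (Mo := Mo) hK2 x k j = 0 := by
  rw [← Finset.add_sum_erase _ _ (Finset.mem_univ (Fin.castLE hK2 k)), gg_diag,
    Finset.sum_congr rfl (fun j hj => gg_off' hK2 x k j (Finset.mem_erase.mp hj).1),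
    neg_add_cancel]

/-- sum of the row-1 entries other than the diagonal one, in terms of free data -/
def rowS (y : ↥(ℒᶜ.erase (Fin.castLE hK2 1)) → ZMod Mo) : ZMod Mo :=
  ∑ l ∈ ℒ, r 1 l + ∑ q ∈ (ℒᶜ.erase (Fin.castLE hK2 1)).attach, y q

/-- restriction of a matrix to the free coordinates -/
def restr (x : {p : Fin 2 × Fin K // p.2 ≠ Fin.castLE hK2 p.1} → ZMod Mo)
    (q : ↥(ℒᶜ.erase (Fin.castLE hK2 1))) : ZMod Mo :=
  x ⟨(1, q.1), (Finset.mem_erase.mp q.2).1⟩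

/-- reconstruction of a matrix from the free coordinates -/
def build (y : ↥(ℒᶜ.erase (Fin.castLE hK2 1)) → ZMod Mo)
    (p : {p : Fin 2 × Fin K // p.2 ≠ Fin.castLE hK2 p.1}) : ZMod Mo :=
  if h1 : p.1.1 = 1 then
    if hm : p.1.2 ∈ ℒ then r 1 p.1.2
    else y ⟨p.1.2, Finset.mem_erase.mpr ⟨by rw [← h1]; exact p.2, Finset.mem_compl.mpr hm⟩⟩
  else
    if hm : p.1.2 ∈ ℒ then r 0 p.1.2
    else if he : p.1.2 = Fin.castLE hK2 1 then σ (Fin.castLE hK2 1) + rowS hK2 ℒ r y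
    else σ p.1.2 - y ⟨p.1.2, Finset.mem_erase.mpr ⟨he, Finset.mem_compl.mpr hm⟩⟩

lemma build_one_mem (y) (l : Fin K) (hl : l ≠ Fin.castLE hK2 1) (hm : l ∈ ℒ) :
    build hK2 ℒ r σ y ⟨(1, l), hl⟩ = r 1 l := by
  simp [build, hm]

lemma build_one_not (y) (l : Fin K) (hl : l ≠ Fin.castLE hK2 1) (hm : l ∉ ℒ) :
    build hK2 ℒ r σ y ⟨(1, l), hl⟩
      = y ⟨l, Finset.mem_erase.mpr ⟨hl, Finset.mem_compl.mpr hm⟩⟩ := by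
  simp [build, hm]

lemma build_zero_mem (y) (l : Fin K) (hl : l ≠ Fin.castLE hK2 0) (hm : l ∈ ℒ) :
    build hK2 ℒ r σ y ⟨(0, l), hl⟩ = r 0 l := by
  simp [build, hm]

lemma build_zero_e1 (y) (hl : Fin.castLE hK2 1 ≠ Fin.castLE hK2 0)
    (hm : Fin.castLE hK2 1 ∉ ℒ) :
    build hK2 ℒ r σ y ⟨(0, Fin.castLE hK2 1), hl⟩
      = σ (Fin.castLE hK2 1) + rowS hK2 ℒ r y := by
  simp [build, hm]

lemma build_zero_other (y) (l : Fin K) (hl : l ≠ Fin.castLE hK2 0)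
    (hm : l ∉ ℒ) (he : l ≠ Fin.castLE hK2 1) :
    build hK2 ℒ r σ y ⟨(0, l), hl⟩
      = σ l - y ⟨l, Finset.mem_erase.mpr ⟨he, Finset.mem_compl.mpr hm⟩⟩ := by
  simp [build, hm, he]

variable (hI : ∀ k : Fin 2, Fin.castLE hK2 k ∉ ℒ)
include hI

lemma row1_split (x : {p : Fin 2 × Fin K // p.2 ≠ Fin.castLE hK2 p.1} → ZMod Mo) :
    ∑ l ∈ Finset.univ.erase (Fin.castLE hK2 1), ext' hK2 x 1 l
      = ∑ l ∈ ℒ, ext' hK2 x 1 l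
        + ∑ q ∈ (ℒᶜ.erase (Fin.castLE hK2 1)).attach, ext' hK2 x 1 q.1 := by
  rw [Finset.sum_attach _ (fun l => ext' hK2 x 1 l), ← Finset.sum_union
    (Finset.disjoint_left.mpr fun a ha hae =>
      (Finset.mem_compl.mp (Finset.mem_of_mem_erase hae)) ha)]
  congr 1
  ext j
  simp only [Finset.mem_union, Finset.mem_erase, Finset.mem_compl, Finset.mem_univ, and_true]
  constructor
  · intro hj
    by_cases hm : j ∈ ℒ
    · exact Or.inl hm
    · exact Or.inr ⟨hj, hm⟩
  · rintro (hm | ⟨hj, _⟩)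
    · exact fun h => hI 1 (h ▸ hm)
    · exact hj

lemma gg_e1 (x) (hc : Pc hK2 ℒ r x) :
    gg hK2 x 1 (Fin.castLE hK2 1)
      = -(∑ l ∈ ℒ, r 1 l + ∑ q ∈ (ℒᶜ.erase (Fin.castLE hK2 1)).attach,
          x ⟨(1, q.1), (Finset.mem_erase.mp q.2).1⟩) := by
  rw [gg_diag, row1_split hK2 ℒ hI, neg_inj]
  congr 1
  · exact Finset.sum_congr rfl fun l hl => hc 1 l hl
  · exact Finset.sum_congr rfl fun q _ =>
      ext'_eq hK2 x 1 q.1 (Finset.mem_erase.mp q.2).1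

lemma build_Pc (y) : Pc hK2 ℒ r (build hK2 ℒ r σ y) := by
  intro k l hl
  have hne : l ≠ Fin.castLE hK2 k := fun h => hI k (h ▸ hl)
  rw [ext'_eq hK2 _ k l hne]
  fin_cases k
  · exact build_zero_mem hK2 ℒ r σ y l hne hl
  · exact build_one_mem hK2 ℒ r σ y l hne hl

lemma build_Pa' (y) : Pa' hK2 ℒ σ (build hK2 ℒ r σ y) := by
  intro j hj
  obtain ⟨hj0, hjc⟩ := Finset.mem_erase.mp hj
  have hm : j ∉ ℒ := Finset.mem_compl.mp hjc
  by_cases he : j = Fin.castLE hK2 1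
  · subst he
    rw [gg_off hK2 _ 0 (Fin.castLE hK2 1) hj0, build_zero_e1 hK2 ℒ r σ y hj0 hm,
      gg_e1 hK2 ℒ r hI _ (build_Pc hK2 ℒ r σ hI y)]
    have hss : ∑ q ∈ (ℒᶜ.erase (Fin.castLE hK2 1)).attach,
        build hK2 ℒ r σ y ⟨(1, q.1), (Finset.mem_erase.mp q.2).1⟩
        = ∑ q ∈ (ℒᶜ.erase (Fin.castLE hK2 1)).attach, y q := by
      refine Finset.sum_congr rfl fun q _ => ?_
      rw [build_one_not hK2 ℒ r σ y q.1 (Finset.mem_erase.mp q.2).1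
        (Finset.mem_compl.mp (Finset.mem_of_mem_erase q.2))]
    rw [hss]
    simp only [rowS]
    ring
  · rw [gg_off hK2 _ 0 j hj0, gg_off hK2 _ 1 j he,
      build_zero_other hK2 ℒ r σ y j hj0 hm he,
      build_one_not hK2 ℒ r σ y j he hm]
    ring

lemma restr_build (y) : restr hK2 ℒ (build hK2 ℒ r σ y) = y := by
  funext q
  rw [restr, build_one_not hK2 ℒ r σ y q.1 (Finset.mem_erase.mp q.2).1
    (Finset.mem_compl.mp (Finset.mem_of_mem_erase q.2))]

lemma build_restr (x) (hc : Pc hK2 ℒ r x) (ha : Pa' hK2 ℒ σ x) :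
    build hK2 ℒ r σ (restr hK2 ℒ x) = x := by
  funext p
  obtain ⟨⟨k, l⟩, hp⟩ := p
  by_cases hk : k = 1
  · subst hk
    simp only at hp
    by_cases hm : l ∈ ℒ
    · rw [build_one_mem hK2 ℒ r σ _ l hp hm, ← hc 1 l hm, ext'_eq hK2 x 1 l hp]
    · rw [build_one_not hK2 ℒ r σ _ l hp hm]
      rfl
  · have hk0 : k = 0 := by omega
    subst hk0
    simp only at hp
    by_cases hm : l ∈ ℒ
    · rw [build_zero_mem hK2 ℒ r σ _ l hp hm, ← hc 0 l hm, ext'_eq hK2 x 0 l hp]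
    · by_cases he : l = Fin.castLE hK2 1
      · subst he
        rw [build_zero_e1 hK2 ℒ r σ _ hp hm]
        have hpa := ha (Fin.castLE hK2 1)
          (Finset.mem_erase.mpr ⟨hp, Finset.mem_compl.mpr hm⟩)
        rw [gg_off hK2 x 0 _ hp, gg_e1 hK2 ℒ r hI x hc] at hpa
        simp only [rowS, restr]
        linear_combination -hpa
      · rw [build_zero_other hK2 ℒ r σ _ l hp hm he]
        have hpa := ha l (Finset.mem_erase.mpr ⟨hp, Finset.mem_compl.mpr hm⟩)
        rw [gg_off hK2 x 0 l hp, gg_off hK2 x 1 l he] at hpa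
        simp only [restr]
        linear_combination -hpa

lemma sum_L (x) (hc : Pc hK2 ℒ r x) :
    ∑ j ∈ ℒ, (gg hK2 x 0 j + gg hK2 x 1 j) = ∑ l ∈ ℒ, (r 0 l + r 1 l) := by
  refine Finset.sum_congr rfl fun j hj => ?_
  have h0 : j ≠ Fin.castLE hK2 0 := fun h => hI 0 (h ▸ hj)
  have h1 : j ≠ Fin.castLE hK2 1 := fun h => hI 1 (h ▸ hj)
  rw [gg_off' hK2 x 0 j h0, gg_off' hK2 x 1 j h1, hc 0 j hj, hc 1 j hj]

omit hI in
lemma total_zero (x) :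
    ∑ j ∈ ℒ, (gg (Mo := Mo) hK2 x 0 j + gg hK2 x 1 j)
      + ∑ j ∈ ℒᶜ, (gg hK2 x 0 j + gg hK2 x 1 j) = 0 := by
  rw [Finset.sum_add_sum_compl, Finset.sum_add_distrib, gg_rowsum, gg_rowsum, add_zero]

lemma pa_iff (x) (hc : Pc hK2 ℒ r x) :
    Pa hK2 ℒ σ x ↔ (Pa' hK2 ℒ σ x ∧
      (∑ j ∈ ℒᶜ, σ j) + (∑ l ∈ ℒ, (r 0 l + r 1 l)) = 0) := by
  have htot := total_zero hK2 ℒ x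
  rw [sum_L hK2 ℒ r hI x hc] at htot
  constructor
  · intro hpa
    refine ⟨fun j hj => hpa j (Finset.mem_of_mem_erase hj), ?_⟩
    rw [Finset.sum_congr rfl (fun j hj => (hpa j hj).symm)]
    linear_combination htot
  · rintro ⟨hpa', hcons⟩ j hj
    by_cases h0 : j = Fin.castLE hK2 0
    · subst h0
      have he : ∑ j ∈ ℒᶜ, σ j
          = σ (Fin.castLE hK2 0) + ∑ j ∈ ℒᶜ.erase (Fin.castLE hK2 0), σ j :=
        (Finset.add_sum_erase _ _ hj).symm
      have hsplit : ∑ j ∈ ℒᶜ, (gg hK2 x 0 j + gg hK2 x 1 j)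
          = (gg hK2 x 0 (Fin.castLE hK2 0) + gg hK2 x 1 (Fin.castLE hK2 0))
            + ∑ j ∈ ℒᶜ.erase (Fin.castLE hK2 0), (gg hK2 x 0 j + gg hK2 x 1 j) :=
        (Finset.add_sum_erase _ _ hj).symm
      rw [hsplit, Finset.sum_congr rfl (fun j hj => hpa' j hj)] at htot
      rw [he] at hcons
      linear_combination htot - hcons
    · exact hpa' j (Finset.mem_erase.mpr ⟨h0, hj⟩)

lemma card_SCA' [NeZero Mo]
    (S : Finset ({p : Fin 2 × Fin K // p.2 ≠ Fin.castLE hK2 p.1} → ZMod Mo))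
    (hS : ∀ x, x ∈ S ↔ (Pc hK2 ℒ r x ∧ Pa' hK2 ℒ σ x)) :
    S.card = Mo ^ (ℒᶜ.erase (Fin.castLE hK2 1)).card := by
  rw [Finset.card_bij' (fun x _ => restr hK2 ℒ x)
    (fun y _ => build hK2 ℒ r σ y)
    (fun x hx => Finset.mem_univ _)
    (fun y _ => (hS _).mpr ⟨build_Pc hK2 ℒ r σ hI y, build_Pa' hK2 ℒ r σ hI y⟩)
    (fun x hx => build_restr hK2 ℒ r σ hI x ((hS x).mp hx).1 ((hS x).mp hx).2)
    (fun y _ => restr_build hK2 ℒ r σ hI y)]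
  rw [Finset.card_univ, Fintype.card_fun, ZMod.card, Fintype.card_coe]

end Counting

lemma R_eq_gg {Ω : Type*} (hK2 : 2 ≤ K) (R : Fin 2 → Fin K → Ω → ZMod Mo)
    (hdiag : ∀ (k : Fin 2) (ω : Ω),
      R k (Fin.castLE hK2 k) ω
        = - ∑ l ∈ Finset.univ.erase (Fin.castLE hK2 k), R k l ω)
    (ω : Ω) (k : Fin 2) (j : Fin K) :
    R k j ω = gg hK2 (fun p => R p.1.1 p.1.2 ω) k j := by
  by_cases h : j = Fin.castLE hK2 k
  · subst h
    rw [gg_diag, hdiag k ω, neg_inj]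
    refine Finset.sum_congr rfl fun l hl => ?_
    rw [ext'_eq hK2 _ k l (Finset.mem_erase.mp hl).1]
  · rw [gg_off hK2 _ k j h]

lemma card_Idx (hK2 : 2 ≤ K) :
    Fintype.card {p : Fin 2 × Fin K // p.2 ≠ Fin.castLE hK2 p.1} = 2 * K - 2 := by
  have h1 : Fintype.card {p : Fin 2 × Fin K // p.2 = Fin.castLE hK2 p.1} = 2 := by
    have e : {p : Fin 2 × Fin K // p.2 = Fin.castLE hK2 p.1} ≃ Fin 2 :=
      ⟨fun p => p.1.1, fun k => ⟨(k, Fin.castLE hK2 k), rfl⟩,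
        fun p => Subtype.ext (Prod.ext rfl p.2.symm), fun k => rfl⟩
    rw [Fintype.card_congr e, Fintype.card_fin]
  have h2 := Fintype.card_subtype_compl
    (p := fun p : Fin 2 × Fin K => p.2 = Fin.castLE hK2 p.1)
  rw [h1, Fintype.card_prod, Fintype.card_fin, Fintype.card_fin] at h2
  exact h2

lemma ennreal_calc (a b : ENNReal) (ha0 : a ≠ 0) (haT : a ≠ ⊤) (hb0 : b ≠ 0)
    (hbT : b ≠ ⊤) : a * (b * (a * b * b)⁻¹) = b⁻¹ := by
  rw [ENNReal.mul_inv (Or.inl (mul_ne_zero ha0 hb0)) (Or.inr hb0),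
      ENNReal.mul_inv (Or.inl ha0) (Or.inr hb0)]
  calc a * (b * (a⁻¹ * b⁻¹ * b⁻¹)) = (a * a⁻¹) * (b * b⁻¹) * b⁻¹ := by ring
  _ = b⁻¹ := by
      rw [ENNReal.mul_inv_cancel ha0 haT, ENNReal.mul_inv_cancel hb0 hbT, one_mul, one_mul]

section Measure

variable {Ω : Type*} [MeasurableSpace Ω] (μ : Measure Ω)
variable (hK2 : 2 ≤ K) (R : Fin 2 → Fin K → Ω → ZMod Mo)

lemma singleton_prob [NeZero Mo]
    (hmeas : ∀ k l, Measurable (R k l))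
    (hunif : ∀ (k : Fin 2) (l : Fin K), l ≠ Fin.castLE hK2 k →
      μ.map (R k l) = (PMF.uniformOfFintype (ZMod Mo)).toMeasure)
    (k : Fin 2) (l : Fin K) (h : l ≠ Fin.castLE hK2 k) (c : ZMod Mo) :
    μ (R k l ⁻¹' {c}) = (Mo : ENNReal)⁻¹ := by
  rw [← Measure.map_apply (hmeas k l) (MeasurableSpace.measurableSet_top), hunif k l h,
    PMF.toMeasure_apply_singleton _ _ (MeasurableSpace.measurableSet_top),
    PMF.uniformOfFintype_apply, ZMod.card]

lemma point_prob [NeZero Mo]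
    (hindep : iIndepFun
      (fun p : {p : Fin 2 × Fin K // p.2 ≠ Fin.castLE hK2 p.1} => R p.1.1 p.1.2) μ)
    (hmeas : ∀ k l, Measurable (R k l))
    (hunif : ∀ (k : Fin 2) (l : Fin K), l ≠ Fin.castLE hK2 k →
      μ.map (R k l) = (PMF.uniformOfFintype (ZMod Mo)).toMeasure)
    (x : {p : Fin 2 × Fin K // p.2 ≠ Fin.castLE hK2 p.1} → ZMod Mo) :
    μ {ω | ∀ p : {p : Fin 2 × Fin K // p.2 ≠ Fin.castLE hK2 p.1},
        R p.1.1 p.1.2 ω = x p}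
      = (Mo : ENNReal)⁻¹ ^ (2 * K - 2) := by
  have hset : {ω | ∀ p : {p : Fin 2 × Fin K // p.2 ≠ Fin.castLE hK2 p.1},
      R p.1.1 p.1.2 ω = x p}
      = ⋂ p ∈ (Finset.univ :
          Finset {p : Fin 2 × Fin K // p.2 ≠ Fin.castLE hK2 p.1}),
        R p.1.1 p.1.2 ⁻¹' {x p} := by
    ext ω; simp
  rw [hset, hindep.measure_inter_preimage_eq_mul (sets := fun p => {x p}) Finset.univ
    (fun p _ => MeasurableSpace.measurableSet_top)]
  rw [Finset.prod_congr rfl (fun p _ => singleton_prob μ hK2 R hmeas hunif p.1.1 p.1.2 p.2 (x p)),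
    Finset.prod_const, Finset.card_univ, card_Idx hK2]

lemma finset_prob [NeZero Mo]
    (hindep : iIndepFun
      (fun p : {p : Fin 2 × Fin K // p.2 ≠ Fin.castLE hK2 p.1} => R p.1.1 p.1.2) μ)
    (hmeas : ∀ k l, Measurable (R k l))
    (hunif : ∀ (k : Fin 2) (l : Fin K), l ≠ Fin.castLE hK2 k →
      μ.map (R k l) = (PMF.uniformOfFintype (ZMod Mo)).toMeasure)
    (S : Finset ({p : Fin 2 × Fin K // p.2 ≠ Fin.castLE hK2 p.1} → ZMod Mo)) :
    μ {ω | (fun p => R p.1.1 p.1.2 ω) ∈ S}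
      = S.card * (Mo : ENNReal)⁻¹ ^ (2 * K - 2) := by
  have hset : {ω | (fun p => R p.1.1 p.1.2 ω) ∈ S}
      = ⋃ x ∈ S, {ω | ∀ p : {p : Fin 2 × Fin K // p.2 ≠ Fin.castLE hK2 p.1},
          R p.1.1 p.1.2 ω = x p} := by
    ext ω
    simp only [Set.mem_setOf_eq, Set.mem_iUnion]
    constructor
    · intro h; exact ⟨_, h, fun p => rfl⟩
    · rintro ⟨x, hx, h⟩
      have : (fun p => R p.1.1 p.1.2 ω) = x := funext h
      rwa [this]
  rw [hset, measure_biUnion_finset ?hd ?hm]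
  · rw [Finset.sum_congr rfl (fun x _ => point_prob μ hK2 R hindep hmeas hunif x),
      Finset.sum_const, nsmul_eq_mul]
  case hd =>
    intro x hx y hy hxy
    refine Set.disjoint_left.mpr fun ω h1 h2 => hxy ?_
    exact funext fun p => (h1 p).symm.trans (h2 p)
  case hm =>
    intro x hx
    have : {ω | ∀ p : {p : Fin 2 × Fin K // p.2 ≠ Fin.castLE hK2 p.1},
        R p.1.1 p.1.2 ω = x p}
        = ⋂ p : {p : Fin 2 × Fin K // p.2 ≠ Fin.castLE hK2 p.1},
          R p.1.1 p.1.2 ⁻¹' {x p} := by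
      ext ω; simp
    rw [this]
    exact MeasurableSet.iInter fun p => hmeas p.1.1 p.1.2 MeasurableSpace.measurableSet_top

end Measure

end Stmt8Aux

open Stmt8Aux

/-- Lemma 1 of the paper.  Let `K ≥ 4`, `L ≤ K − 2`, let `ℒ` be the set of colluding
indices (of size `L`, not containing the two indices `I = {0,1}`), and for `k ∈ I`
let `(R_{k,l})_{l ≠ k}` be mutually independent uniform random variables on `ℤ_M`,
with `R_{k,k} = −⊕_{l ≠ k} R_{k,l}`.  Then conditionally on the values
`(R_{k,l})_{k ∈ I, l ∈ ℒ} = r`, the probability that `R_{0,j} ⊕ R_{1,j} = σ_j` for all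
`j ∉ ℒ` equals `M^{−(K−L−1)}` times the indicator that
`∑_{j ∉ ℒ} σ_j ⊕ ∑_{l ∈ ℒ} (r_{0,l} ⊕ r_{1,l}) = 0`. -/
theorem stmt8 {Ω : Type*} [MeasurableSpace Ω] (μ : Measure Ω) [IsProbabilityMeasure μ]
    (Mo K L : ℕ) [NeZero Mo] (hK : 4 ≤ K) (hL : L ≤ K - 2)
    (ℒ : Finset (Fin K)) (hcard : ℒ.card = L)
    (hI : ∀ k : Fin 2, Fin.castLE (by omega : 2 ≤ K) k ∉ ℒ)
    (R : Fin 2 → Fin K → Ω → ZMod Mo)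
    (hmeas : ∀ k l, Measurable (R k l))
    (hindep : iIndepFun
      (fun p : {p : Fin 2 × Fin K // p.2 ≠ Fin.castLE (by omega : 2 ≤ K) p.1} =>
        R p.1.1 p.1.2) μ)
    (hunif : ∀ (k : Fin 2) (l : Fin K), l ≠ Fin.castLE (by omega : 2 ≤ K) k →
      μ.map (R k l) = (PMF.uniformOfFintype (ZMod Mo)).toMeasure)
    (hdiag : ∀ (k : Fin 2) (ω : Ω),
      R k (Fin.castLE (by omega : 2 ≤ K) k) ω
        = - ∑ l ∈ Finset.univ.erase (Fin.castLE (by omega : 2 ≤ K) k), R k l ω)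
    (r : Fin 2 → Fin K → ZMod Mo) (σ : Fin K → ZMod Mo) :
    (μ[|{ω | ∀ (k : Fin 2), ∀ l ∈ ℒ, R k l ω = r k l}])
        {ω | ∀ j ∈ ℒᶜ, R 0 j ω + R 1 j ω = σ j}
      = ((Mo : ENNReal))⁻¹ ^ (K - L - 1) *
          (if (∑ j ∈ ℒᶜ, σ j) + (∑ l ∈ ℒ, (r 0 l + r 1 l)) = 0 then 1 else 0) := by
  classical
  have hK2 : 2 ≤ K := by omega
  have hI' : ∀ k : Fin 2, Fin.castLE hK2 k ∉ ℒ := hI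
  have hindep' : iIndepFun
      (fun p : {p : Fin 2 × Fin K // p.2 ≠ Fin.castLE hK2 p.1} => R p.1.1 p.1.2) μ := hindep
  have hunif' : ∀ (k : Fin 2) (l : Fin K), l ≠ Fin.castLE hK2 k →
      μ.map (R k l) = (PMF.uniformOfFintype (ZMod Mo)).toMeasure := hunif
  have hdiag' : ∀ (k : Fin 2) (ω : Ω),
      R k (Fin.castLE hK2 k) ω
        = - ∑ l ∈ Finset.univ.erase (Fin.castLE hK2 k), R k l ω := hdiag
  set C : Set Ω := {ω | ∀ (k : Fin 2), ∀ l ∈ ℒ, R k l ω = r k l} with hCdef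
  set A : Set Ω := {ω | ∀ j ∈ ℒᶜ, R 0 j ω + R 1 j ω = σ j} with hAdef
  set SL : Finset {p : Fin 2 × Fin K // p.2 ≠ Fin.castLE hK2 p.1} :=
    Finset.univ.filter (fun p => p.1.2 ∈ ℒ) with hSLdef
  have hCset : C = ⋂ p ∈ SL, R p.1.1 p.1.2 ⁻¹' {r p.1.1 p.1.2} := by
    ext ω
    simp only [hCdef, Set.mem_setOf_eq, Set.mem_iInter, Set.mem_preimage,
      Set.mem_singleton_iff, hSLdef, Finset.mem_filter, Finset.mem_univ, true_and]
    constructor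
    · intro h p hp
      exact h p.1.1 p.1.2 hp
    · intro h k l hl
      exact h ⟨(k, l), fun hh => hI' k (hh ▸ hl)⟩ hl
  have hCmeas : MeasurableSet C := by
    rw [hCset]
    exact MeasurableSet.biInter (Finset.countable_toSet SL)
      (fun p _ => hmeas p.1.1 p.1.2 MeasurableSpace.measurableSet_top)
  have hSLcard : SL.card = 2 * L := by
    rw [Finset.card_bij' (fun p _ => p.1)
      (fun q hq => (⟨q, fun hh => hI' q.1 (hh ▸ (Finset.mem_product.mp hq).2)⟩ :
        {p : Fin 2 × Fin K // p.2 ≠ Fin.castLE hK2 p.1}))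
      (t := Finset.univ ×ˢ ℒ)
      (fun p hp => Finset.mem_product.mpr
        ⟨Finset.mem_univ _, (Finset.mem_filter.mp hp).2⟩)
      (fun q hq => Finset.mem_filter.mpr
        ⟨Finset.mem_univ _, (Finset.mem_product.mp hq).2⟩)
      (fun p hp => Subtype.ext rfl)
      (fun q hq => rfl)]
    rw [Finset.card_product, Finset.card_univ, Fintype.card_fin, hcard]
  have hmuC : μ C = (Mo : ENNReal)⁻¹ ^ (2 * L) := by
    rw [hCset, hindep'.measure_inter_preimage_eq_mul
      (sets := fun p => {r p.1.1 p.1.2}) SL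
      (fun p _ => MeasurableSpace.measurableSet_top),
      Finset.prod_congr rfl
        (fun p _ => singleton_prob μ hK2 R hmeas hunif' p.1.1 p.1.2 p.2 _),
      Finset.prod_const, hSLcard]
  set SCA : Finset ({p : Fin 2 × Fin K // p.2 ≠ Fin.castLE hK2 p.1} → ZMod Mo) :=
    Finset.univ.filter (fun x => Pc hK2 ℒ r x ∧ Pa hK2 ℒ σ x) with hSCAdef
  have hCA : C ∩ A = {ω | (fun p => R p.1.1 p.1.2 ω) ∈ SCA} := by
    ext ω
    have hgg : ∀ (k : Fin 2) (j : Fin K),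
        gg hK2 (fun p => R p.1.1 p.1.2 ω) k j = R k j ω :=
      fun k j => (R_eq_gg hK2 R hdiag' ω k j).symm
    have hext : ∀ (k : Fin 2) (l : Fin K) (h : l ≠ Fin.castLE hK2 k),
        ext' hK2 (fun p => R p.1.1 p.1.2 ω) k l = R k l ω :=
      fun k l h => ext'_eq hK2 _ k l h
    simp only [Set.mem_inter_iff, hCdef, hAdef, Set.mem_setOf_eq, hSCAdef,
      Finset.mem_filter, Finset.mem_univ, true_and]
    constructor
    · rintro ⟨h1, h2⟩
      refine ⟨fun k l hl => ?_, fun j hj => ?_⟩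
      · rw [hext k l (fun hh => hI' k (hh ▸ hl))]
        exact h1 k l hl
      · rw [hgg, hgg]
        exact h2 j hj
    · rintro ⟨h1, h2⟩
      refine ⟨fun k l hl => ?_, fun j hj => ?_⟩
      · rw [← hext k l (fun hh => hI' k (hh ▸ hl))]
        exact h1 k l hl
      · have := h2 j hj
        rwa [hgg, hgg] at this
  have hmuCA : μ (C ∩ A) = SCA.card * (Mo : ENNReal)⁻¹ ^ (2 * K - 2) := by
    rw [hCA]
    exact finset_prob μ hK2 R hindep' hmeas hunif' SCA
  rw [cond_apply hCmeas μ A, hmuC, hmuCA]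
  have hm0 : (Mo : ENNReal) ≠ 0 := Nat.cast_ne_zero.mpr (NeZero.ne Mo)
  have hmT : (Mo : ENNReal) ≠ ⊤ := ENNReal.natCast_ne_top Mo
  by_cases hcons : (∑ j ∈ ℒᶜ, σ j) + (∑ l ∈ ℒ, (r 0 l + r 1 l)) = 0
  · have hJ : (ℒᶜ.erase (Fin.castLE hK2 1)).card = K - L - 1 := by
      rw [Finset.card_erase_of_mem (Finset.mem_compl.mpr (hI' 1)),
        Finset.card_compl, Fintype.card_fin, hcard]
    have hcardSCA : SCA.card = Mo ^ (K - L - 1) := by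
      rw [← hJ]
      refine card_SCA' hK2 ℒ r σ hI' SCA (fun x => ?_)
      simp only [hSCAdef, Finset.mem_filter, Finset.mem_univ, true_and]
      constructor
      · rintro ⟨hc, ha⟩
        exact ⟨hc, ((pa_iff hK2 ℒ r σ hI' x hc).mp ha).1⟩
      · rintro ⟨hc, ha⟩
        exact ⟨hc, (pa_iff hK2 ℒ r σ hI' x hc).mpr ⟨ha, hcons⟩⟩
    rw [hcardSCA, if_pos hcons, mul_one, Nat.cast_pow]
    have h2 : 2 * K - 2 = (2 * L + (K - L - 1)) + (K - L - 1) := by omega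
    rw [h2, ← ENNReal.inv_pow, ← ENNReal.inv_pow, ← ENNReal.inv_pow, inv_inv,
      pow_add, pow_add]
    exact ennreal_calc ((Mo : ENNReal) ^ (2 * L)) ((Mo : ENNReal) ^ (K - L - 1))
      (pow_ne_zero _ hm0) (ENNReal.pow_ne_top hmT)
      (pow_ne_zero _ hm0) (ENNReal.pow_ne_top hmT)
  · have hcardSCA : SCA.card = 0 := by
      rw [Finset.card_eq_zero, Finset.eq_empty_iff_forall_notMem]
      intro x hx
      obtain ⟨-, hc, ha⟩ := Finset.mem_filter.mp hx
      exact hcons ((pa_iff hK2 ℒ r σ hI' x hc).mp ha).2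
    rw [hcardSCA, if_neg hcons, mul_zero, Nat.cast_zero, zero_mul, mul_zero]
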